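/- Let 0 < α < 2 < n and define G⁺_α(x,y) = C_n |x-y|^{α-n} ∫₀^{4x_n y_n/|x-y|²} z^{α/2-1} (z+1)^{-n/2} dz for x, y ∈ ℝⁿ₊ with x ≠ y. Then for any x, y ∈ ℝⁿ₊ with x ≠ y and any z⁰ ∈ ℝⁿ (such that the Kelvin images remain in ℝⁿ₊), G⁺_α((x-z⁰)/|x-z⁰|², (y-z⁰)/|y-z⁰|²) / (|x-z⁰|^{n-α} |y-z⁰|^{n-α}) = G⁺_α(x-z⁰, y-z⁰). -/

import Mathlib

noncomputable section

/-- The last coordinate of a point in `ℝⁿ`. -/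
def lastCoord (n : ℕ) (x : EuclideanSpace ℝ (Fin n)) : ℝ :=
  if h : 0 < n then x ⟨n - 1, by omega⟩ else 0

/-- The upper half space `ℝⁿ₊ = {x : xₙ > 0}`. -/
def upperHalf (n : ℕ) : Set (EuclideanSpace ℝ (Fin n)) := {x | 0 < lastCoord n x}

/-- The Green's function `G⁺_α` of `(-Δ)^{α/2}` on the half space,
with normalizing constant `Cn`. -/
def Galpha (n : ℕ) (Cn α : ℝ) (x y : EuclideanSpace ℝ (Fin n)) : ℝ :=
  Cn * ‖x - y‖ ^ (α - (n : ℝ)) *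
    ∫ z in (0 : ℝ)..(4 * lastCoord n x * lastCoord n y / ‖x - y‖ ^ 2),
      z ^ (α / 2 - 1) * (z + 1) ^ (-(n : ℝ) / 2)

lemma lastCoord_smul (n : ℕ) (c : ℝ) (v : EuclideanSpace ℝ (Fin n)) :
    lastCoord n (c • v) = c * lastCoord n v := by
  unfold lastCoord
  split <;> simp [PiLp.smul_apply]

/-- Kelvin-transform invariance of the half-space Green's function of `(-Δ)^{α/2}`. -/
theorem Galpha_kelvin_invariance (n : ℕ) (hn : 3 ≤ n) (Cn α : ℝ)
    (hCn : 0 < Cn) (hα : 0 < α) (hα2 : α < 2)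
    (x y z0 : EuclideanSpace ℝ (Fin n))
    (hx : x ∈ upperHalf n) (hy : y ∈ upperHalf n) (hxy : x ≠ y)
    (hxk : (‖x - z0‖ ^ 2)⁻¹ • (x - z0) ∈ upperHalf n)
    (hyk : (‖y - z0‖ ^ 2)⁻¹ • (y - z0) ∈ upperHalf n) :
    Galpha n Cn α ((‖x - z0‖ ^ 2)⁻¹ • (x - z0)) ((‖y - z0‖ ^ 2)⁻¹ • (y - z0)) /
        (‖x - z0‖ ^ ((n : ℝ) - α) * ‖y - z0‖ ^ ((n : ℝ) - α)) =
      Galpha n Cn α (x - z0) (y - z0) := by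
  set a := x - z0 with ha_def
  set b := y - z0 with hb_def
  have ha : a ≠ 0 := by
    intro h
    rw [h] at hxk
    simp [upperHalf, lastCoord] at hxk
  have hb : b ≠ 0 := by
    intro h
    rw [h] at hyk
    simp [upperHalf, lastCoord] at hyk
  have hna : (0:ℝ) < ‖a‖ := norm_pos_iff.mpr ha
  have hnb : (0:ℝ) < ‖b‖ := norm_pos_iff.mpr hb
  have hab : a ≠ b := by
    intro h
    apply hxy
    have := congrArg (· + z0) h
    simpa [ha_def, hb_def] using this
  have hnab : (0:ℝ) < ‖a - b‖ := norm_pos_iff.mpr (sub_ne_zero.mpr hab)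
  -- distance between Kelvin images
  have hdist : ‖(‖a‖ ^ 2)⁻¹ • a - (‖b‖ ^ 2)⁻¹ • b‖ = ‖a - b‖ / (‖a‖ * ‖b‖) := by
    have := dist_div_norm_sq_smul (x := a) (y := b) ha hb 1
    simp only [one_pow, div_pow, one_div, dist_eq_norm] at this
    rw [inv_pow, inv_pow] at this
    rw [this]; ring
  unfold Galpha
  rw [hdist]
  -- last coordinates of images
  rw [lastCoord_smul, lastCoord_smul]
  have hup : 4 * ((‖a‖ ^ 2)⁻¹ * lastCoord n a) * ((‖b‖ ^ 2)⁻¹ * lastCoord n b) /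
      (‖a - b‖ / (‖a‖ * ‖b‖)) ^ 2
      = 4 * lastCoord n a * lastCoord n b / ‖a - b‖ ^ 2 := by
    field_simp
  rw [hup]
  -- prefactor
  have hpow : (‖a - b‖ / (‖a‖ * ‖b‖)) ^ (α - (n:ℝ)) =
      ‖a - b‖ ^ (α - (n:ℝ)) * (‖a‖ ^ ((n:ℝ) - α) * ‖b‖ ^ ((n:ℝ) - α)) := by
    rw [Real.div_rpow hnab.le (by positivity), Real.mul_rpow hna.le hnb.le,
      div_eq_mul_inv, mul_inv,
      show ((n:ℝ) - α) = -(α - (n:ℝ)) by ring, Real.rpow_neg hna.le, Real.rpow_neg hnb.le]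
  rw [hpow]
  have h1 : ‖a‖ ^ ((n:ℝ) - α) ≠ 0 := by positivity
  have h2 : ‖b‖ ^ ((n:ℝ) - α) ≠ 0 := by positivity
  field_simp
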